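/- Let s ≥ 1 and 0 ≤ j ≤ s−1 be integers and let p be an (s,j)-Hermite polynomial. Then p(x) ≥ 0 for all x ∈ [0,1]. -/

import Mathlib

/-- A real polynomial `p` is an `(s,j)`-Hermite polynomial if `deg p ≤ 2s-1` and, for
every `0 ≤ k ≤ s-1`, `p⁽ᵏ⁾(0) = δ_{j,k}` and `p⁽ᵏ⁾(1) = 0`. -/
def IsHermitePoly (s j : ℕ) (p : Polynomial ℝ) : Prop :=
  p.natDegree ≤ 2 * s - 1 ∧
    ∀ k < s, (Polynomial.derivative^[k] p).eval 0 = (if j = k then (1 : ℝ) else 0) ∧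
      (Polynomial.derivative^[k] p).eval 1 = 0

/-- A real polynomial `q` is an `(s,j)`-dual Hermite polynomial if `deg q ≤ 2s-1` and, for
every `0 ≤ k ≤ s-1`, `q⁽ᵏ⁾(0) = 0` and `q⁽ᵏ⁾(1) = δ_{j,k}`. -/
def IsDualHermitePoly (s j : ℕ) (q : Polynomial ℝ) : Prop :=
  q.natDegree ≤ 2 * s - 1 ∧
    ∀ k < s, (Polynomial.derivative^[k] q).eval 0 = 0 ∧
      (Polynomial.derivative^[k] q).eval 1 = (if j = k then (1 : ℝ) else 0)


open Polynomial in
theorem hermite_aux (s j : ℕ) (hs : 1 ≤ s) (hj : j ≤ s - 1)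
    (p : Polynomial ℝ) (hp : IsHermitePoly s j p) :
    ∀ x ∈ Set.Icc (0:ℝ) 1, 0 ≤ p.eval x := by
  obtain ⟨hdeg, hcond⟩ := hp
  have hjs : j < s := by omega
  have hp0 : p ≠ 0 := by
    intro h
    have h1 := (hcond j hjs).1
    simp [h] at h1
  -- coefficient facts
  have hkc : ∀ k, j ≤ k → k < s → p.coeff k = if k = j then ((j.factorial : ℝ))⁻¹ else 0 := by
    intro k hk1 hk2
    have h1 := (hcond k hk2).1
    rw [← Polynomial.coeff_zero_eq_eval_zero, Polynomial.coeff_iterate_derivative,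
      Nat.zero_add, Nat.descFactorial_self, nsmul_eq_mul] at h1
    have hf : (k.factorial : ℝ) ≠ 0 := by exact_mod_cast k.factorial_ne_zero
    by_cases hkj : k = j
    · subst hkj
      simp only [if_pos rfl] at h1 ⊢
      field_simp at h1 ⊢
      simp only [↓reduceIte] at h1 ⊢
      rw [eq_div_iff hf]; linarith
    · rw [if_neg (fun h => hkj h.symm)] at h1
      rw [if_neg hkj]
      exact (mul_eq_zero.mp h1).resolve_left hf
  -- divisibility
  have hdvd1 : (X - C (1:ℝ)) ^ s ∣ p := by
    have hlt : s - 1 < p.rootMultiplicity 1 := by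
      apply Polynomial.lt_rootMultiplicity_of_isRoot_iterate_derivative_of_mem_nonZeroDivisors' hp0
      · intro m hm
        exact (hcond m (by omega)).2
      · intro m _ hm0
        exact mem_nonZeroDivisors_of_ne_zero (by exact_mod_cast hm0)
    exact dvd_trans (pow_dvd_pow _ (by omega)) (p.pow_rootMultiplicity_dvd 1)
  have hdvd0 : (X : ℝ[X]) ^ j ∣ p := by
    rcases Nat.eq_zero_or_pos j with hj0 | hj0
    · simp [hj0]
    have hlt : j - 1 < p.rootMultiplicity 0 := by
      apply Polynomial.lt_rootMultiplicity_of_isRoot_iterate_derivative_of_mem_nonZeroDivisors' hp0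
      · intro m hm
        have h1 := (hcond m (by omega)).1
        rw [if_neg (by omega)] at h1
        exact h1
      · intro m _ hm0
        exact mem_nonZeroDivisors_of_ne_zero (by exact_mod_cast hm0)
    have := p.pow_rootMultiplicity_dvd 0
    rw [C_0, sub_zero] at this
    exact dvd_trans (pow_dvd_pow _ (by omega)) this
  have hcop : IsCoprime ((X : ℝ[X]) ^ j) ((X - C (1:ℝ)) ^ s) := by
    apply IsCoprime.pow
    have : IsCoprime ((X : ℝ[X]) - C 0) (X - C 1) :=
      Polynomial.isCoprime_X_sub_C_of_isUnit_sub (by norm_num)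
    simpa using this
  obtain ⟨g, hg⟩ : (X : ℝ[X]) ^ j * (X - C (1:ℝ)) ^ s ∣ p := hcop.mul_dvd hdvd0 hdvd1
  have hg0 : g ≠ 0 := by
    intro h
    rw [h, mul_zero] at hg
    exact hp0 hg
  have hmon : ((X : ℝ[X]) - C 1) ^ s ≠ 0 := ((monic_X_sub_C (1:ℝ)).pow s).ne_zero
  have hgd : g.natDegree ≤ s - 1 - j := by
    have hnd : p.natDegree = j + s + g.natDegree := by
      rw [hg, natDegree_mul (mul_ne_zero (pow_ne_zero _ X_ne_zero) hmon) hg0,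
        natDegree_mul (pow_ne_zero _ X_ne_zero) hmon, natDegree_pow, natDegree_pow,
        natDegree_X, natDegree_X_sub_C]
      ring
    omega
  -- h and its coefficients
  set h : ℝ[X] := (X - C (1:ℝ)) ^ s * g with hh_def
  have hph : p = (X : ℝ[X]) ^ j * h := by rw [hg, hh_def, mul_assoc]
  have hhc : ∀ b, b ≤ s - 1 - j → 0 ≤ h.coeff b := by
    intro b hb
    have : h.coeff b = p.coeff (b + j) := by
      rw [hph, Polynomial.coeff_X_pow_mul]
    rw [this, hkc (b + j) (by omega) (by omega)]
    split
    · positivity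
    · exact le_rfl
  -- power series identity
  set g' : ℝ[X] := C ((-1:ℝ)^s) * g with hg'_def
  have hps : (g' : PowerSeries ℝ) = (PowerSeries.invOneSubPow ℝ s).val * (h : PowerSeries ℝ) := by
    have hkey : (h : PowerSeries ℝ) = (1 - PowerSeries.X) ^ s * (g' : PowerSeries ℝ) := by
      rw [hh_def, hg'_def]
      push_cast [Polynomial.coe_mul, Polynomial.coe_pow, Polynomial.coe_sub, Polynomial.coe_X,
        Polynomial.coe_C]
      rw [show ((1 : PowerSeries ℝ) - PowerSeries.X) ^ s * (PowerSeries.C ((-1:ℝ)^s) * ↑g)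
          = ((1 - PowerSeries.X) * PowerSeries.C (-1:ℝ)) ^ s * ↑g by
        rw [mul_pow, map_pow]; ring]
      congr 1
      rw [← neg_one_mul, map_mul]
      simp [mul_comm, sub_mul, mul_sub]
      ring
    calc (g' : PowerSeries ℝ)
        = ((PowerSeries.invOneSubPow ℝ s).val * (PowerSeries.invOneSubPow ℝ s).inv)
            * (g' : PowerSeries ℝ) := by rw [Units.val_inv, one_mul]
      _ = (PowerSeries.invOneSubPow ℝ s).val * (h : PowerSeries ℝ) := by
          rw [PowerSeries.invOneSubPow_inv_eq_one_sub_pow, mul_assoc, ← hkey]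
  have hg'd : g'.natDegree ≤ s - 1 - j := le_trans (natDegree_C_mul_le _ _) hgd
  have hg'c : ∀ n, 0 ≤ g'.coeff n := by
    intro n
    by_cases hn : n ≤ s - 1 - j
    · have : g'.coeff n = PowerSeries.coeff n (g' : PowerSeries ℝ) :=
        (Polynomial.coeff_coe g' n).symm
      rw [this, hps, PowerSeries.coeff_mul]
      apply Finset.sum_nonneg
      intro ab hab
      rw [Finset.HasAntidiagonal.mem_antidiagonal] at hab
      apply mul_nonneg
      · rw [PowerSeries.invOneSubPow_val_eq_mk_sub_one_add_choose_of_pos ℝ s hs,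
          PowerSeries.coeff_mk]
        positivity
      · rw [Polynomial.coeff_coe]
        exact hhc ab.2 (by omega)
    · rw [Polynomial.coeff_eq_zero_of_natDegree_lt (by omega)]
  -- conclusion
  intro x hx
  obtain ⟨hx0, hx1⟩ := hx
  have hge : 0 ≤ g'.eval x := by
    rw [Polynomial.eval_eq_sum_range]
    apply Finset.sum_nonneg
    intro i _
    exact mul_nonneg (hg'c i) (pow_nonneg hx0 i)
  have hpe : p.eval x = x ^ j * (1 - x) ^ s * g'.eval x := by
    rw [hg, hg'_def]
    simp only [eval_mul, eval_pow, eval_sub, eval_X, eval_C, eval_one]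
    have hxx : (x - 1) ^ s = (1 - x) ^ s * (-1:ℝ) ^ s := by
      rw [← mul_pow]; ring_nf
    rw [hxx]; ring
  rw [hpe]
  have := pow_nonneg hx0 j
  have h2 : (0:ℝ) ≤ (1 - x) ^ s := pow_nonneg (by linarith) s
  positivity

/-- an `(s,j)`-Hermite polynomial is nonnegative on `[0,1]`. -/
theorem hermitePoly_nonneg_on_unit_interval (s j : ℕ) (hs : 1 ≤ s) (hj : j ≤ s - 1)
    (p : Polynomial ℝ) (hp : IsHermitePoly s j p) :
    ∀ x ∈ Set.Icc (0:ℝ) 1, 0 ≤ p.eval x :=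
  hermite_aux s j hs hj p hp
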